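/- Let x^(1),...,x^(n) be independent uniformly distributed points in [0,1]^d, P_n = {x^(1),...,x^(n)}, and dist the maximum metric on the d-torus. Then for p > 0, E[∫_{[0,1]^d} dist(x, P_n)^p dx] = 2^(−p) · n!/((p/d+1)(p/d+2)⋯(p/d+n)). -/

import Mathlib

open MeasureTheory ProbabilityTheory

/-- The torus metric `dist(x,y) = min_{k ∈ ℤ^d} ‖x + k - y‖_∞` on `[0,1]^d`
(here `‖·‖` is the sup-norm on `Fin d → ℝ`). -/
noncomputable def torusDist (d : ℕ) (x y : Fin d → ℝ) : ℝ :=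
  ⨅ k : Fin d → ℤ, ‖(fun i => x i + k i - y i)‖

open Set

private lemma torusDist_eq (d : ℕ) (x y : Fin d → ℝ) :
    torusDist d x y = ‖(fun i => x i + (round (y i - x i) : ℝ) - y i)‖ := by
  apply le_antisymm
  · exact ciInf_le ⟨0, fun v ⟨k, hk⟩ => hk ▸ norm_nonneg _⟩ (fun i => round (y i - x i))
  · apply le_ciInf
    intro k
    apply pi_norm_le_iff_of_nonneg (norm_nonneg _) |>.2
    intro i
    rw [Real.norm_eq_abs]
    have h1 : |x i + (round (y i - x i) : ℝ) - y i| = |(y i - x i) - round (y i - x i)| := by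
      rw [← abs_neg]; ring_nf
    have h2 : |(y i - x i) - (round (y i - x i) : ℝ)| ≤ |(y i - x i) - (k i : ℝ)| := round_le _ _
    have h3 : |(y i - x i) - (k i : ℝ)| = |x i + (k i : ℝ) - y i| := by
      rw [← abs_neg]; ring_nf
    calc |x i + (round (y i - x i) : ℝ) - y i| ≤ |x i + (k i : ℝ) - y i| := by
          rw [h1]; rw [h3] at h2; exact h2
      _ ≤ ‖(fun i => x i + (k i : ℝ) - y i)‖ := by
          simpa using norm_le_pi_norm (fun i => x i + (k i : ℝ) - y i) i

private lemma torusDist_nonneg (d : ℕ) (x y : Fin d → ℝ) : 0 ≤ torusDist d x y := by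
  rw [torusDist_eq]; exact norm_nonneg _

private lemma torusDist_le_half (d : ℕ) (x y : Fin d → ℝ) : torusDist d x y ≤ 1/2 := by
  rw [torusDist_eq]
  apply pi_norm_le_iff_of_nonneg (by norm_num) |>.2
  intro i
  rw [Real.norm_eq_abs]
  have h1 : |x i + (round (y i - x i) : ℝ) - y i| = |(y i - x i) - round (y i - x i)| := by
    rw [← abs_neg]; ring_nf
  rw [h1]
  exact abs_sub_round _

private lemma torusDist_lt_iff (d : ℕ) (x y : Fin d → ℝ) {t : ℝ} (ht : 0 < t) :
    torusDist d x y < t ↔ ∀ i, |y i - x i - round (y i - x i)| < t := by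
  rw [torusDist_eq, pi_norm_lt_iff ht]
  apply forall_congr'
  intro i
  rw [Real.norm_eq_abs]
  have : |x i + (round (y i - x i) : ℝ) - y i| = |y i - x i - round (y i - x i)| := by
    rw [← abs_neg]; ring_nf
  rw [this]

private lemma measurable_torusDist (d : ℕ) :
    Measurable (fun q : (Fin d → ℝ) × (Fin d → ℝ) => torusDist d q.1 q.2) := by
  have : (fun q : (Fin d → ℝ) × (Fin d → ℝ) => torusDist d q.1 q.2)
      = fun q => ‖(fun i => q.1 i + (round (q.2 i - q.1 i) : ℝ) - q.2 i)‖ := by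
    funext q; exact torusDist_eq d q.1 q.2
  rw [this]
  apply Measurable.norm
  apply measurable_pi_lambda
  intro i
  have hm : Measurable fun q : (Fin d → ℝ) × (Fin d → ℝ) => q.2 i - q.1 i :=
    ((measurable_pi_apply i).comp measurable_snd).sub ((measurable_pi_apply i).comp measurable_fst)
  have hround : Measurable fun q : (Fin d → ℝ) × (Fin d → ℝ) => (round (q.2 i - q.1 i) : ℝ) := by
    have : Measurable (fun c : ℝ => (round c : ℝ)) := by
      have h1 : (fun c : ℝ => (round c : ℝ)) = (fun z : ℤ => (z : ℝ)) ∘ (fun c : ℝ => round c) := rfl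
      rw [h1]
      apply Measurable.comp
      · exact measurable_from_top
      · simp only [round_eq]
        exact (measurable_id.add_const _).floor
    exact this.comp hm
  exact (((measurable_pi_apply i).comp measurable_fst).add hround).sub
    ((measurable_pi_apply i).comp measurable_snd)

section FinsetSec
open Finset

private lemma prodPos (m : ℕ) (a : ℝ) (ha : 0 < a) : (0:ℝ) < ∏ j ∈ range m, (a + j) :=
  Finset.prod_pos fun j _ => by positivity

private lemma sumId : ∀ (n : ℕ) (a : ℝ), 0 < a →
    ∑ k ∈ range (n+1), (-1:ℝ)^k * (n.choose k) / (a + k)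
      = (n.factorial : ℝ) / ∏ j ∈ range (n+1), (a + j) := by
  intro n
  induction n with
  | zero => intro a ha; simp
  | succ n ih =>
    intro a ha
    have h1 := ih a ha
    have h2 := ih (a+1) (by linarith)
    have expand : ∑ k ∈ range (n+2), (-1:ℝ)^k * ((n+1).choose k) / (a + k)
        = (∑ k ∈ range (n+2), (-1:ℝ)^k * (n.choose k) / (a + k))
          - ∑ k ∈ range (n+1), (-1:ℝ)^k * (n.choose k) / ((a+1) + k) := by
      rw [Finset.sum_range_succ' (fun k => (-1:ℝ)^k * ((n+1).choose k) / (a + k)),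
          Finset.sum_range_succ' (fun k => (-1:ℝ)^k * (n.choose k) / (a + k)),
          add_sub_right_comm, ← Finset.sum_sub_distrib]
      congr 1
      · apply Finset.sum_congr rfl
        intro k _
        rw [Nat.choose_succ_succ]
        push_cast
        ring
      · simp
    have last0 : ∑ k ∈ range (n+2), (-1:ℝ)^k * (n.choose k) / (a + k)
        = ∑ k ∈ range (n+1), (-1:ℝ)^k * (n.choose k) / (a + k) := by
      rw [Finset.sum_range_succ, Nat.choose_succ_self]
      simp
    rw [expand, last0, h1, h2]
    set A := ∏ j ∈ range (n+1), (a + (j:ℝ)) with hAdef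
    set B := ∏ j ∈ range (n+1), (a + 1 + (j:ℝ)) with hBdef
    have hA := prodPos (n+1) a ha
    have hB := prodPos (n+1) (a+1) (by linarith)
    rw [← hAdef] at hA
    rw [← hBdef] at hB
    have e1 := Finset.prod_range_succ (fun j : ℕ => (a + (j:ℝ))) (n+1)
    have e2 := Finset.prod_range_succ' (fun j : ℕ => (a + (j:ℝ))) (n+1)
    have e3 : ∏ j ∈ range (n+1), (a + ((j:ℝ)+1)) = B := by
      rw [hBdef]
      exact Finset.prod_congr rfl (fun k _ => by ring)
    push_cast at e1 e2
    rw [e3] at e2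
    rw [e1] at e2
    rw [e1, ← hAdef]
    rw [← hAdef] at e2
    have hrel : B * a = A * (a + (↑n + 1)) := by linear_combination -e2
    have hane : a ≠ 0 := ne_of_gt ha
    have hAne : A ≠ 0 := ne_of_gt hA
    have hBne : B ≠ 0 := ne_of_gt hB
    have hsne : a + (↑n + 1) ≠ 0 := by positivity
    rw [div_sub_div _ _ hAne hBne, Nat.factorial_succ]
    push_cast
    rw [div_eq_div_iff (by positivity) (by positivity)]
    linear_combination (↑n.factorial * A) * hrel

end FinsetSec

open MeasureTheory Set

private lemma vol_Icc_inter_Ioo (a b : ℝ) :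
    volume (Icc (0:ℝ) 1 ∩ Ioo a b) = ENNReal.ofReal (min 1 b - max 0 a) := by
  rcases le_or_gt (max 0 a) (min 1 b) with hab | hab
  · apply le_antisymm
    · refine le_trans (measure_mono ?_) (le_of_eq Real.volume_Icc)
      rintro s ⟨⟨h0, h1⟩, ha, hb⟩
      exact ⟨max_le h0 ha.le, le_min h1 hb.le⟩
    · refine le_trans (le_of_eq Real.volume_Ioo.symm) (measure_mono ?_)
      rintro s ⟨h1, h2⟩
      exact ⟨⟨le_of_lt (lt_of_le_of_lt (le_max_left _ _) h1),
          le_of_lt (lt_of_lt_of_le h2 (min_le_left _ _))⟩,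
        lt_of_le_of_lt (le_max_right _ _) h1, lt_of_lt_of_le h2 (min_le_right _ _)⟩
  · have hempty : Icc (0:ℝ) 1 ∩ Ioo a b = ∅ := by
      rw [Set.eq_empty_iff_forall_notMem]
      rintro s ⟨⟨h0, h1⟩, ha, hb⟩
      have : max 0 a ≤ s := max_le h0 ha.le
      have : s ≤ min 1 b := le_min h1 hb.le
      linarith
    rw [hempty, measure_empty, Eq.comm, ENNReal.ofReal_eq_zero]
    linarith

private lemma oneDim (x t : ℝ) (hx0 : 0 ≤ x) (hx1 : x ≤ 1) (ht0 : 0 < t) (ht : t ≤ 1/2) :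
    volume {s : ℝ | s ∈ Icc (0:ℝ) 1 ∧ |s - x - round (s - x)| < t} = ENNReal.ofReal (2*t) := by
  have hset : {s : ℝ | s ∈ Icc (0:ℝ) 1 ∧ |s - x - round (s - x)| < t}
      = (Icc (0:ℝ) 1 ∩ Ioo (x-t) (x+t)) ∪ (Icc (0:ℝ) 1 ∩ Ioo (x+1-t) (x+1+t))
        ∪ (Icc (0:ℝ) 1 ∩ Ioo (x-1-t) (x-1+t)) := by
    ext s
    simp only [mem_setOf_eq, mem_union, mem_inter_iff, mem_Icc, mem_Ioo]
    constructor
    · rintro ⟨⟨hs0, hs1⟩, hlt⟩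
      set c := s - x with hc
      have hr : (-3/2 : ℝ) ≤ (round c : ℝ) ∧ (round c : ℝ) ≤ 3/2 := by
        have h1 : |c - round c| ≤ 1/2 := abs_sub_round c
        have h2 : |c| ≤ 1 := by rw [abs_le]; constructor <;> [linarith; linarith]
        rw [abs_le] at h1 h2
        constructor <;> linarith [h1.1, h1.2, h2.1, h2.2]
      have hrInt : round c = -1 ∨ round c = 0 ∨ round c = 1 := by
        have h1 : (-2 : ℤ) < round c := by exact_mod_cast lt_of_lt_of_le (by norm_num : (-2:ℝ) < -3/2) hr.1
        have h2 : round c < 2 := by exact_mod_cast lt_of_le_of_lt hr.2 (by norm_num : (3/2:ℝ) < 2)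
        omega
      rw [abs_lt] at hlt
      rcases hrInt with h | h | h <;> rw [h] at hlt <;> push_cast at hlt
      · right; exact ⟨⟨hs0, hs1⟩, by linarith [hlt.1], by linarith [hlt.2]⟩
      · left; left; exact ⟨⟨hs0, hs1⟩, by linarith [hlt.1], by linarith [hlt.2]⟩
      · left; right; exact ⟨⟨hs0, hs1⟩, by linarith [hlt.1], by linarith [hlt.2]⟩
    · rintro ((⟨⟨hs0, hs1⟩, h1, h2⟩ | ⟨⟨hs0, hs1⟩, h1, h2⟩) | ⟨⟨hs0, hs1⟩, h1, h2⟩) <;>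
        refine ⟨⟨hs0, hs1⟩, ?_⟩
      · exact lt_of_le_of_lt (by simpa using round_le (s - x) 0) (by rw [abs_lt]; constructor <;> linarith)
      · exact lt_of_le_of_lt (round_le (s - x) 1) (by rw [abs_lt]; push_cast; constructor <;> linarith)
      · exact lt_of_le_of_lt (round_le (s - x) (-1)) (by rw [abs_lt]; push_cast; constructor <;> linarith)
  have hd1 : Disjoint ((Icc (0:ℝ) 1 ∩ Ioo (x-t) (x+t)) ∪ (Icc (0:ℝ) 1 ∩ Ioo (x+1-t) (x+1+t)))
      (Icc (0:ℝ) 1 ∩ Ioo (x-1-t) (x-1+t)) := by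
    rw [Set.disjoint_left]
    rintro s (⟨⟨hs0, _⟩, hs1, _⟩ | ⟨⟨hs0, _⟩, hs1, _⟩) ⟨_, _, hs2⟩ <;> linarith
  have hd2 : Disjoint (Icc (0:ℝ) 1 ∩ Ioo (x-t) (x+t)) (Icc (0:ℝ) 1 ∩ Ioo (x+1-t) (x+1+t)) := by
    rw [Set.disjoint_left]
    rintro s ⟨_, _, hs1⟩ ⟨_, hs2, _⟩; linarith
  rw [hset, measure_union hd1 (measurableSet_Icc.inter measurableSet_Ioo),
      measure_union hd2 (measurableSet_Icc.inter measurableSet_Ioo),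
      vol_Icc_inter_Ioo, vol_Icc_inter_Ioo, vol_Icc_inter_Ioo]
  have e2a : min 1 (x+1+t) = 1 := min_eq_left (by linarith)
  have e2b : max 0 (x+1-t) = x+1-t := max_eq_right (by linarith)
  have e3a : min 1 (x-1+t) = x-1+t := min_eq_right (by linarith)
  have e3b : max 0 (x-1-t) = 0 := max_eq_left (by linarith)
  rw [e2a, e2b, e3a, e3b, sub_zero]
  have hv2 : (1:ℝ) - (x+1-t) = t - x := by ring
  rw [hv2]
  rcases le_total x t with hxt | hxt
  · have e1a : max 0 (x-t) = 0 := max_eq_left (by linarith)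
    have e1b : min 1 (x+t) = x+t := min_eq_right (by linarith)
    rw [e1a, e1b, sub_zero, ENNReal.ofReal_of_nonpos (by linarith : x-1+t ≤ 0), add_zero,
        ← ENNReal.ofReal_add (by linarith) (by linarith)]
    congr 1; ring
  · have e1a : max 0 (x-t) = x-t := max_eq_right (by linarith)
    rw [e1a, ENNReal.ofReal_of_nonpos (by linarith : t-x ≤ 0), add_zero]
    rcases le_total (x+t) 1 with h1 | h1
    · have e1b : min 1 (x+t) = x+t := min_eq_right h1
      rw [e1b, ENNReal.ofReal_of_nonpos (by linarith : x-1+t ≤ 0), add_zero]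
      congr 1; ring
    · have e1b : min 1 (x+t) = 1 := min_eq_left h1
      rw [e1b, ← ENNReal.ofReal_add (by linarith) (by linarith)]
      congr 1; ring
private lemma cube_volume (d : ℕ) :
    volume (Set.univ.pi fun _ : Fin d => Icc (0:ℝ) 1) = 1 := by
  rw [volume_pi_pi]
  simp [Real.volume_Icc]

private lemma cube_lt_meas (d : ℕ) (x : Fin d → ℝ) (hx : x ∈ Set.univ.pi fun _ : Fin d => Icc (0:ℝ) 1)
    {t : ℝ} (ht0 : 0 < t) (ht : t ≤ 1/2) :
    volume ({y : Fin d → ℝ | torusDist d x y < t} ∩ Set.univ.pi fun _ : Fin d => Icc (0:ℝ) 1)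
      = ENNReal.ofReal (2*t) ^ d := by
  have hset : ({y : Fin d → ℝ | torusDist d x y < t} ∩ Set.univ.pi fun _ : Fin d => Icc (0:ℝ) 1)
      = Set.univ.pi fun i : Fin d => {s : ℝ | s ∈ Icc (0:ℝ) 1 ∧ |s - x i - round (s - x i)| < t} := by
    ext y
    simp only [Set.mem_inter_iff, Set.mem_setOf_eq, Set.mem_pi, Set.mem_univ, forall_true_left,
      torusDist_lt_iff d x y ht0]
    constructor
    · rintro ⟨h1, h2⟩ i; exact ⟨h2 i, h1 i⟩
    · intro h; exact ⟨fun i => (h i).2, fun i => (h i).1⟩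
  rw [hset, volume_pi_pi]
  have : ∀ i : Fin d, volume {s : ℝ | s ∈ Icc (0:ℝ) 1 ∧ |s - x i - round (s - x i)| < t}
      = ENNReal.ofReal (2*t) := by
    intro i
    exact oneDim (x i) t (hx i (Set.mem_univ i)).1 (hx i (Set.mem_univ i)).2 ht0 ht
  rw [Finset.prod_congr rfl (fun i _ => this i), Finset.prod_const, Finset.card_univ, Fintype.card_fin]

private lemma measurableSet_lt_set (d : ℕ) (x : Fin d → ℝ) (t : ℝ) :
    MeasurableSet {y : Fin d → ℝ | torusDist d x y < t} := by
  have : Measurable fun y : Fin d → ℝ => torusDist d x y := by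
    have h0 : (fun y : Fin d → ℝ => torusDist d x y)
        = (fun q : (Fin d → ℝ) × (Fin d → ℝ) => torusDist d q.1 q.2) ∘ (fun y => (x, y)) := rfl
    rw [h0]
    exact (measurable_torusDist d).comp (measurable_const.prodMk measurable_id)
  exact measurableSet_lt this measurable_const

private lemma surv_one (d : ℕ) (x : Fin d → ℝ) (hx : x ∈ Set.univ.pi fun _ : Fin d => Icc (0:ℝ) 1)
    {t : ℝ} (ht0 : 0 < t) (ht : t ≤ 1/2) :
    volume.restrict (Set.univ.pi fun _ : Fin d => Icc (0:ℝ) 1) {y : Fin d → ℝ | t ≤ torusDist d x y}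
      = ENNReal.ofReal ((1 - (2*t)^d)) := by
  have hcube : MeasurableSet (Set.univ.pi fun _ : Fin d => Icc (0:ℝ) 1) :=
    MeasurableSet.univ_pi fun _ => measurableSet_Icc
  have hcompl : {y : Fin d → ℝ | t ≤ torusDist d x y} = {y : Fin d → ℝ | torusDist d x y < t}ᶜ := by
    ext y; simp [not_lt]
  rw [hcompl, Measure.restrict_apply (measurableSet_lt_set d x t).compl]
  have hseteq : {y : Fin d → ℝ | torusDist d x y < t}ᶜ ∩ (Set.univ.pi fun _ : Fin d => Icc (0:ℝ) 1)
      = (Set.univ.pi fun _ : Fin d => Icc (0:ℝ) 1)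
        \ ({y : Fin d → ℝ | torusDist d x y < t} ∩ Set.univ.pi fun _ : Fin d => Icc (0:ℝ) 1) := by
    ext y
    simp only [Set.mem_inter_iff, Set.mem_compl_iff, Set.mem_diff, Set.mem_setOf_eq]
    tauto
  rw [hseteq, measure_diff Set.inter_subset_right
      (((measurableSet_lt_set d x t).inter hcube).nullMeasurableSet)
      (ne_of_lt (lt_of_le_of_lt (measure_mono Set.inter_subset_right) (by rw [cube_volume]; exact ENNReal.one_lt_top)))]
  rw [cube_volume, cube_lt_meas d x hx ht0 ht]
  have h2t1 : (2*t)^d ≤ 1 := by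
    apply pow_le_one₀ (by linarith) (by linarith)
  rw [ENNReal.ofReal_sub _ (by positivity), ENNReal.ofReal_one, ENNReal.ofReal_pow (by linarith)]

private lemma surv_min {Ω : Type*} [MeasurableSpace Ω] (P : Measure Ω) [IsProbabilityMeasure P]
    (d n : ℕ) (hn : 1 ≤ n)
    (X : Fin n → Ω → (Fin d → ℝ)) (hmeas : ∀ i, Measurable (X i))
    (hindep : iIndepFun X P)
    (hlaw : ∀ i, Measure.map (X i) P
      = volume.restrict (Set.univ.pi fun _ : Fin d => Set.Icc (0:ℝ) 1))
    (x : Fin d → ℝ) (hx : x ∈ Set.univ.pi fun _ : Fin d => Icc (0:ℝ) 1)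
    {t : ℝ} (ht0 : 0 < t) (ht : t ≤ 1/2) :
    P {ω | t ≤ ⨅ i, torusDist d x (X i ω)} = ENNReal.ofReal (1 - (2*t)^d) ^ n := by
  have hne : Nonempty (Fin n) := Fin.pos_iff_nonempty.1 hn
  have hB : MeasurableSet {y : Fin d → ℝ | t ≤ torusDist d x y} := by
    have hcompl : {y : Fin d → ℝ | t ≤ torusDist d x y} = {y : Fin d → ℝ | torusDist d x y < t}ᶜ := by
      ext y; simp [not_lt]
    rw [hcompl]; exact (measurableSet_lt_set d x t).compl
  have hset : {ω | t ≤ ⨅ i, torusDist d x (X i ω)}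
      = ⋂ i, X i ⁻¹' {y : Fin d → ℝ | t ≤ torusDist d x y} := by
    ext ω
    simp only [Set.mem_setOf_eq, Set.mem_iInter, Set.mem_preimage]
    exact le_ciInf_iff (Set.finite_range _).bddBelow
  rw [hset, hindep.meas_iInter (fun i => ⟨{y : Fin d → ℝ | t ≤ torusDist d x y}, hB, rfl⟩)]
  have hone : ∀ i : Fin n, P (X i ⁻¹' {y : Fin d → ℝ | t ≤ torusDist d x y})
      = ENNReal.ofReal (1 - (2*t)^d) := by
    intro i
    rw [← Measure.map_apply (hmeas i) hB, hlaw i]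
    exact surv_one d x hx ht0 ht
  rw [Finset.prod_congr rfl (fun i _ => hone i), Finset.prod_const, Finset.card_univ,
    Fintype.card_fin]

private lemma expect_eq {Ω : Type*} [MeasurableSpace Ω] (P : Measure Ω) [IsProbabilityMeasure P]
    (d n : ℕ) (hd : 1 ≤ d) (hn : 1 ≤ n) (p : ℝ) (hp : 0 < p)
    (X : Fin n → Ω → (Fin d → ℝ)) (hmeas : ∀ i, Measurable (X i))
    (hindep : iIndepFun X P)
    (hlaw : ∀ i, Measure.map (X i) P
      = volume.restrict (Set.univ.pi fun _ : Fin d => Set.Icc (0:ℝ) 1))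
    (x : Fin d → ℝ) (hx : x ∈ Set.univ.pi fun _ : Fin d => Icc (0:ℝ) 1) :
    ∫ ω, (⨅ i, torusDist d x (X i ω)) ^ p ∂P
      = ∫ t in Set.Ioc (0:ℝ) (1/2), ((1 - (2*t)^d)^n * (p * t^(p-1))) := by
  have hne : Nonempty (Fin n) := Fin.pos_iff_nonempty.1 hn
  set Y : Ω → ℝ := fun ω => ⨅ i, torusDist d x (X i ω) with hY
  have hTmeas : ∀ i, Measurable fun ω => torusDist d x (X i ω) := by
    intro i
    have h0 : (fun ω => torusDist d x (X i ω))
        = (fun q : (Fin d → ℝ) × (Fin d → ℝ) => torusDist d q.1 q.2) ∘ (fun ω => (x, X i ω)) := rfl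
    rw [h0]
    exact (measurable_torusDist d).comp (measurable_const.prodMk (hmeas i))
  have hYmeas : Measurable Y := Measurable.iInf hTmeas
  have hYnn : ∀ ω, 0 ≤ Y ω := fun ω =>
    le_ciInf (fun i => torusDist_nonneg d x (X i ω))
  have hYle : ∀ ω, Y ω ≤ 1/2 := fun ω =>
    (ciInf_le (Set.finite_range _).bddBelow (Classical.arbitrary (Fin n))).trans
      (torusDist_le_half d x _)
  -- layer cake
  have g_intble : ∀ t > (0:ℝ), IntervalIntegrable (fun t => p * t^(p-1)) volume 0 t := by
    intro t ht
    exact (intervalIntegral.intervalIntegrable_rpow' (by linarith)).const_mul p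
  have key := lintegral_comp_eq_lintegral_meas_le_mul P
    (f := Y) (g := fun t => p * t^(p-1))
    (Filter.Eventually.of_forall hYnn) hYmeas.aemeasurable g_intble
    ((ae_restrict_iff' measurableSet_Ioi).2 (Filter.Eventually.of_forall (fun t ht =>
      mul_nonneg hp.le (Real.rpow_nonneg (le_of_lt ht) _))))
  have hprim : ∀ s : ℝ, 0 ≤ s → ∫ u in (0:ℝ)..s, p * u^(p-1) = s^p := by
    intro s hs
    rw [intervalIntegral.integral_const_mul,
      integral_rpow (Or.inl (by linarith : (-1:ℝ) < p - 1))]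
    have h1 : p - 1 + 1 = p := by ring
    rw [h1, Real.zero_rpow (ne_of_gt hp)]
    field_simp
    simp
  have hLHS : ∫⁻ ω, ENNReal.ofReal (∫ u in (0:ℝ)..(Y ω), p * u^(p-1)) ∂P
      = ∫⁻ ω, ENNReal.ofReal ((Y ω) ^ p) ∂P := by
    apply lintegral_congr
    intro ω
    rw [hprim (Y ω) (hYnn ω)]
  rw [hLHS] at key
  -- Bochner integral to lintegral
  have hint : ∫ ω, (Y ω) ^ p ∂P = (∫⁻ ω, ENNReal.ofReal ((Y ω) ^ p) ∂P).toReal := by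
    rw [integral_eq_lintegral_of_nonneg_ae
      (Filter.Eventually.of_forall (fun ω => Real.rpow_nonneg (hYnn ω) p))
      ((hYmeas.pow measurable_const).aestronglyMeasurable)]
  rw [hint, key]
  -- split the t-integral
  have hsplit : ∫⁻ t in Ioi (0:ℝ), P {a | t ≤ Y a} * ENNReal.ofReal (p * t^(p-1))
      = ∫⁻ t in Ioc (0:ℝ) (1/2), ENNReal.ofReal ((1 - (2*t)^d)^n * (p * t^(p-1))) := by
    rw [← Set.Ioc_union_Ioi_eq_Ioi (by norm_num : (0:ℝ) ≤ 1/2),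
      lintegral_union measurableSet_Ioi (Set.Ioc_disjoint_Ioi le_rfl)]
    have hzero : ∫⁻ t in Ioi (1/2:ℝ), P {a | t ≤ Y a} * ENNReal.ofReal (p * t^(p-1)) = 0 := by
      have hz : ∀ t ∈ Ioi (1/2:ℝ), P {a | t ≤ Y a} * ENNReal.ofReal (p * t^(p-1)) = (fun _ => (0:ENNReal)) t := by
        intro t htt
        have hempty : {a | t ≤ Y a} = ∅ := by
          rw [Set.eq_empty_iff_forall_notMem]
          intro a ha
          exact absurd (le_trans ha (hYle a)) (not_le.2 htt)
        rw [hempty, measure_empty, zero_mul]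
      rw [setLIntegral_congr_fun measurableSet_Ioi hz, lintegral_zero]
    rw [hzero, add_zero]
    apply setLIntegral_congr_fun measurableSet_Ioc
    intro t htt
    have ht0 : 0 < t := htt.1
    have ht : t ≤ 1/2 := htt.2
    have h2t1 : (2*t)^d ≤ 1 := pow_le_one₀ (by linarith) (by linarith)
    beta_reduce
    rw [surv_min P d n hn X hmeas hindep hlaw x hx ht0 ht,
      ← ENNReal.ofReal_pow (by linarith : (0:ℝ) ≤ 1 - (2*t)^d),
      ← ENNReal.ofReal_mul (pow_nonneg (by linarith : (0:ℝ) ≤ 1 - (2*t)^d) n)]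
  rw [hsplit]
  have hmble : AEStronglyMeasurable (fun t : ℝ => (1 - (2*t)^d)^n * (p * t^(p-1)))
      (volume.restrict (Ioc (0:ℝ) (1/2))) := by
    apply Measurable.aestronglyMeasurable
    have h1 : Measurable fun t : ℝ => (1 - (2*t)^d)^n :=
      ((measurable_const.sub ((measurable_const_mul 2).pow_const d)).pow_const n)
    exact h1.mul ((measurable_id'.pow measurable_const).const_mul p)
  have hnnae : 0 ≤ᵐ[volume.restrict (Ioc (0:ℝ) (1/2))]
      fun t : ℝ => (1 - (2*t)^d)^n * (p * t^(p-1)) := by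
    refine (ae_restrict_iff' measurableSet_Ioc).2 (Filter.Eventually.of_forall fun t htt => ?_)
    have h2t1 : (2*t)^d ≤ 1 := pow_le_one₀ (by linarith [htt.1]) (by linarith [htt.2])
    have ht0 : (0:ℝ) < t := htt.1
    have h1 : (0:ℝ) ≤ 1 - (2*t)^d := by linarith
    positivity
  exact (integral_eq_lintegral_of_nonneg_ae hnnae hmble).symm

open Finset in
private lemma calcInt (d n : ℕ) (hd : 1 ≤ d) (hn : 1 ≤ n) (p : ℝ) (hp : 0 < p) :
    ∫ t in Set.Ioc (0:ℝ) (1/2), ((1 - (2*t)^d)^n * (p * t^(p-1)))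
      = (2:ℝ)^(-p) * (n.factorial : ℝ) / ∏ j ∈ Finset.Icc 1 n, (p / d + j) := by
  have hstep1 : ∫ t in Set.Ioc (0:ℝ) (1/2), ((1 - (2*t)^d)^n * (p * t^(p-1)))
      = ∫ t in Set.Ioc (0:ℝ) (1/2),
          (∑ k ∈ range (n+1), ((-1:ℝ)^k * (n.choose k) * 2^(d*k) * p) * t^(p - 1 + (d*k : ℕ))) := by
    apply setIntegral_congr_fun measurableSet_Ioc
    intro t htt
    dsimp only
    have ht0 : (0:ℝ) < t := htt.1
    have hbin : (1 - (2*t)^d)^n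
        = ∑ k ∈ range (n+1), (-1:ℝ)^k * (n.choose k) * 2^(d*k) * t^(d*k) := by
      have h1 : (1 - (2*t)^d)^n = (-(2*t)^d + 1)^n := by ring_nf
      rw [h1, add_pow]
      apply Finset.sum_congr rfl
      intro k _
      rw [neg_pow, mul_pow 2 t d, mul_pow ((2:ℝ)^d) (t^d) k, ← pow_mul, ← pow_mul, one_pow]
      ring
    rw [hbin, Finset.sum_mul]
    apply Finset.sum_congr rfl
    intro k _
    have hrw : (t:ℝ)^(d*k) * t^(p-1) = t^(p - 1 + (d*k : ℕ)) := by
      rw [← Real.rpow_natCast t (d*k), ← Real.rpow_add ht0]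
      congr 1
      ring
    calc (-1:ℝ)^k * (n.choose k) * 2^(d*k) * t^(d*k) * (p * t^(p-1))
        = ((-1:ℝ)^k * (n.choose k) * 2^(d*k) * p) * (t^(d*k) * t^(p-1)) := by ring
      _ = ((-1:ℝ)^k * (n.choose k) * 2^(d*k) * p) * t^(p - 1 + (d*k : ℕ)) := by rw [hrw]
  rw [hstep1]
  have hintk : ∀ k : ℕ, IntegrableOn (fun t : ℝ => ((-1:ℝ)^k * (n.choose k) * 2^(d*k) * p) * t^(p - 1 + (d*k : ℕ)))
      (Set.Ioc (0:ℝ) (1/2)) volume := by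
    intro k
    have h1 : (-1:ℝ) < p - 1 + (d*k : ℕ) := by
      have : (0:ℝ) ≤ (d*k : ℕ) := Nat.cast_nonneg _
      linarith
    exact ((intervalIntegral.intervalIntegrable_rpow' h1).1).const_mul _
  rw [integral_finset_sum _ (fun k _ => hintk k)]
  have hterm : ∀ k ∈ range (n+1),
      ∫ t in Set.Ioc (0:ℝ) (1/2), ((-1:ℝ)^k * (n.choose k) * 2^(d*k) * p) * t^(p - 1 + (d*k : ℕ))
        = (2:ℝ)^(-p) * ((-1:ℝ)^k * (n.choose k) * (p / (p + (d*k : ℕ)))) := by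
    intro k _
    rw [integral_const_mul]
    rw [← intervalIntegral.integral_of_le (by norm_num : (0:ℝ) ≤ 1/2)]
    have h1 : (-1:ℝ) < p - 1 + (d*k : ℕ) := by
      have : (0:ℝ) ≤ (d*k : ℕ) := Nat.cast_nonneg _
      linarith
    rw [integral_rpow (Or.inl h1)]
    have he : p - 1 + (d*k : ℕ) + 1 = p + (d*k : ℕ) := by ring
    have hpd : (0:ℝ) < p + (d*k : ℕ) := by
      have : (0:ℝ) ≤ (d*k : ℕ) := Nat.cast_nonneg _
      linarith
    rw [he, Real.zero_rpow (ne_of_gt hpd)]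
    have hhalf : ((1:ℝ)/2) ^ (p + ((d*k : ℕ):ℝ)) = 2^(-p) / 2^(d*k) := by
      have h0 : ((1:ℝ)/2) ^ (p + ((d*k : ℕ):ℝ)) = 2 ^ (-p + -((d*k : ℕ):ℝ)) := by
        rw [show ((1:ℝ)/2) = 2⁻¹ from by norm_num,
          Real.inv_rpow (by norm_num : (0:ℝ) ≤ 2), ← Real.rpow_neg (by norm_num : (0:ℝ) ≤ 2)]
        congr 1
        ring
      rw [h0, Real.rpow_add (by norm_num : (0:ℝ) < 2), div_eq_mul_inv]
      congr 1
      rw [Real.rpow_neg (by norm_num : (0:ℝ) ≤ 2), Real.rpow_natCast]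
    rw [hhalf, sub_zero]
    have h2ne : ((2:ℝ)^(d*k)) ≠ 0 := by positivity
    field_simp
  rw [Finset.sum_congr rfl hterm, ← Finset.mul_sum]
  have hsum : ∑ k ∈ range (n+1), ((-1:ℝ)^k * (n.choose k) * (p / (p + (d*k : ℕ))))
      = (n.factorial : ℝ) / ∏ j ∈ Finset.Icc 1 n, (p / d + j) := by
    have hd0 : (0:ℝ) < d := by exact_mod_cast hd
    have ha : 0 < p / d := div_pos hp hd0
    have hterm2 : ∀ k ∈ range (n+1), ((-1:ℝ)^k * (n.choose k) * (p / (p + (d*k : ℕ))))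
        = (p/d) * ((-1:ℝ)^k * (n.choose k) / (p/d + k)) := by
      intro k _
      have h1 : p + ((d*k : ℕ) : ℝ) = d * (p/d + k) := by
        push_cast
        field_simp
      rw [h1]
      have h2 : (0:ℝ) < p/d + k := by positivity
      field_simp
    rw [Finset.sum_congr rfl hterm2, ← Finset.mul_sum, sumId n (p/d) ha]
    have hprod : ∏ j ∈ range (n+1), (p/d + j) = (p/d) * ∏ j ∈ Finset.Icc 1 n, (p/d + j) := by
      rw [Finset.prod_range_succ' (fun j => (p/d + (j:ℝ))) n]
      have : ∏ j ∈ Finset.Icc 1 n, (p/d + (j:ℝ)) = ∏ j ∈ range n, (p/d + ((j:ℝ)+1)) := by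
        rw [← Finset.Ico_add_one_right_eq_Icc, Finset.prod_Ico_eq_prod_range]
        apply Finset.prod_congr rfl
        intro j _
        push_cast
        ring
      rw [this]
      push_cast
      ring
    rw [hprod]
    have hIccpos : (0:ℝ) < ∏ j ∈ Finset.Icc 1 n, (p/d + j) :=
      Finset.prod_pos fun j _ => by positivity
    field_simp
  rw [hsum]
  ring


/-- For `n` independent uniform random points `X 0, ..., X (n-1)` in `[0,1]^d` and
`p > 0`, the expected value of `∫_{[0,1]^d} dist(x, P_n)^p dx` (with the torus
maximum metric) equals `2^{-p} n! / ((p/d+1)(p/d+2)⋯(p/d+n))`. -/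
theorem stmt_19 {Ω : Type*} [MeasurableSpace Ω] (P : Measure Ω) [IsProbabilityMeasure P]
    (d n : ℕ) (hd : 1 ≤ d) (hn : 1 ≤ n) (p : ℝ) (hp : 0 < p)
    (X : Fin n → Ω → (Fin d → ℝ)) (hmeas : ∀ i, Measurable (X i))
    (hindep : iIndepFun X P)
    (hlaw : ∀ i, Measure.map (X i) P
      = volume.restrict (Set.univ.pi fun _ : Fin d => Set.Icc (0:ℝ) 1)) :
    (∫ ω, (∫ x in Set.univ.pi fun _ : Fin d => Set.Icc (0:ℝ) 1,
        (⨅ i : Fin n, torusDist d x (X i ω)) ^ p) ∂P)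
      = (2 : ℝ) ^ (-p) * (Nat.factorial n) / ∏ j ∈ Finset.Icc 1 n, (p / d + j) := by
  have hne : Nonempty (Fin n) := Fin.pos_iff_nonempty.1 hn
  have hcubeMeas : MeasurableSet (Set.univ.pi fun _ : Fin d => Set.Icc (0:ℝ) 1) :=
    MeasurableSet.univ_pi fun _ => measurableSet_Icc
  haveI hprob : IsProbabilityMeasure (volume.restrict (Set.univ.pi fun _ : Fin d => Set.Icc (0:ℝ) 1)) := by
    constructor
    rw [Measure.restrict_apply MeasurableSet.univ, Set.univ_inter, cube_volume]
  have hFmeas : Measurable (fun q : Ω × (Fin d → ℝ) => (⨅ i : Fin n, torusDist d q.2 (X i q.1)) ^ p) := by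
    apply Measurable.pow _ measurable_const
    apply Measurable.iInf
    intro i
    have h0 : (fun q : Ω × (Fin d → ℝ) => torusDist d q.2 (X i q.1))
        = (fun r : (Fin d → ℝ) × (Fin d → ℝ) => torusDist d r.1 r.2)
          ∘ (fun q : Ω × (Fin d → ℝ) => (q.2, X i q.1)) := rfl
    rw [h0]
    exact (measurable_torusDist d).comp (measurable_snd.prodMk ((hmeas i).comp measurable_fst))
  have hIntegr : Integrable
      (Function.uncurry fun (ω : Ω) (x : Fin d → ℝ) => (⨅ i : Fin n, torusDist d x (X i ω)) ^ p)
      (P.prod (volume.restrict (Set.univ.pi fun _ : Fin d => Set.Icc (0:ℝ) 1))) := by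
    apply Integrable.mono' (integrable_const (1:ℝ)) hFmeas.aestronglyMeasurable
    apply Filter.Eventually.of_forall
    rintro ⟨ω, x⟩
    have hYnn : 0 ≤ ⨅ i : Fin n, torusDist d x (X i ω) :=
      le_ciInf (fun i => torusDist_nonneg d x (X i ω))
    have hYle : (⨅ i : Fin n, torusDist d x (X i ω)) ≤ 1 :=
      le_trans ((ciInf_le (Set.finite_range _).bddBelow (Classical.arbitrary (Fin n))).trans
        (torusDist_le_half d x _)) (by norm_num)
    rw [Real.norm_eq_abs, abs_of_nonneg (Real.rpow_nonneg hYnn p)]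
    exact Real.rpow_le_one hYnn hYle hp.le
  rw [integral_integral_swap hIntegr]
  have hkey : Set.EqOn
      (fun x : Fin d → ℝ => ∫ ω, (⨅ i : Fin n, torusDist d x (X i ω)) ^ p ∂P)
      (fun _ => (2 : ℝ) ^ (-p) * (Nat.factorial n) / ∏ j ∈ Finset.Icc 1 n, (p / d + j))
      (Set.univ.pi fun _ : Fin d => Set.Icc (0:ℝ) 1) := by
    intro x hx
    exact (expect_eq P d n hd hn p hp X hmeas hindep hlaw x hx).trans (calcInt d n hd hn p hp)
  rw [setIntegral_congr_fun hcubeMeas hkey, setIntegral_const, Measure.real, cube_volume,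
    ENNReal.toReal_one, one_smul]
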